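/- In the setting of the Serdyukov–Christofides algorithm, ρ(T) + ρ(M) < (3/2)·ρ(L₀), where T is a minimum spanning tree, M is a minimum perfect matching on the odd-degree vertices of T, and L₀ is a minimum Hamiltonian cycle. -/

import Mathlib

open scoped Classical

/-- Cyclic weight of a closed tour given by the vertex list `l`:
the sum of `ρ` over consecutive pairs, including the pair closing the cycle. -/
def cycWeight {V : Type*} (ρ : V → V → ℝ) (l : List V) : ℝ :=
  ((l.zip (l.rotate 1)).map fun p => ρ p.1 p.2).sum

/-- The (cyclic) list of edges of a closed tour given by the vertex list `l`. -/
def cycEdges {V : Type*} (l : List V) : List (Sym2 V) :=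
  (l.zip (l.rotate 1)).map fun p => Sym2.mk p.1 p.2

/-- The list of endpoints of a list of matching pairs. -/
def matchVerts {V : Type*} (M : List (V × V)) : List V :=
  M.flatMap fun p => [p.1, p.2]

/-- `M` is a perfect matching on the vertex set `X`: a partition of `X` into pairs. -/
def IsPM {V : Type*} [DecidableEq V] (X : Finset V) (M : List (V × V)) : Prop :=
  (matchVerts M).Nodup ∧ (matchVerts M).toFinset = X

/-- The weight of a matching: the sum of weights of its pairs. -/
def mWeight {V : Type*} (ρ : V → V → ℝ) (M : List (V × V)) : ℝ :=
  (M.map fun p => ρ p.1 p.2).sum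

/-- Total edge weight of a graph. -/
noncomputable def gWeight {V : Type*} [Fintype V] (f : Sym2 V → ℝ) (T : SimpleGraph V) : ℝ :=
  ∑ e ∈ T.edgeSet.toFinset, f e

/-- The weight of a walk in the graph `G` with edge weights `f`
(edges are counted with multiplicity). -/
def walkWeight {V : Type*} (G : SimpleGraph V) (f : Sym2 V → ℝ) {u v : V} (p : G.Walk u v) : ℝ :=
  (p.edges.map f).sum

/-- Shortest-path distance between `i` and `j` (metric closure of `G`). -/
noncomputable def sdist {V : Type*} (G : SimpleGraph V) (f : Sym2 V → ℝ) (i j : V) : ℝ :=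
  sInf {x | ∃ p : G.Walk i j, x = walkWeight G f p}

/-! ### Auxiliary definitions and lemmas -/

namespace Christofides

variable {V : Type*}

/-- Consecutive pairs of a list. -/
def pathPairs (l : List V) : List (V × V) := l.zip l.tail

/-- Weight of an open path given by a vertex list. -/
def pathW (ρ : V → V → ℝ) (l : List V) : ℝ :=
  ((pathPairs l).map fun p => ρ p.1 p.2).sum

@[simp] lemma pathPairs_nil : pathPairs ([] : List V) = [] := rfl
@[simp] lemma pathPairs_single (a : V) : pathPairs [a] = [] := rfl
@[simp] lemma pathPairs_cons_cons (a b : V) (l : List V) :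
    pathPairs (a :: b :: l) = (a, b) :: pathPairs (b :: l) := rfl

@[simp] lemma pathW_nil (ρ : V → V → ℝ) : pathW ρ [] = 0 := rfl
@[simp] lemma pathW_single (ρ : V → V → ℝ) (a : V) : pathW ρ [a] = 0 := rfl
@[simp] lemma pathW_cons_cons (ρ : V → V → ℝ) (a b : V) (l : List V) :
    pathW ρ (a :: b :: l) = ρ a b + pathW ρ (b :: l) := by
  simp [pathW]

lemma zip_left_trunc : ∀ (l : List V) (l' : List V) (r : List V),
    l.length = l'.length → (l ++ r).zip l' = l.zip l'
  | [], [], r, _ => by simp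
  | a :: t, b :: t', r, h => by
    simp only [List.cons_append, List.zip_cons_cons, List.cons.injEq, true_and]
    exact zip_left_trunc t t' r (by simpa using h)

@[simp] lemma rotate_one_cons (a : V) (t : List V) : (a :: t).rotate 1 = t ++ [a] := by
  have := List.rotate_cons_succ t a 0
  simpa using this

lemma cycWeight_eq_pathW (ρ : V → V → ℝ) (a : V) (t : List V) :
    cycWeight ρ (a :: t) = pathW ρ ((a :: t) ++ [a]) := by
  have hz : ((a :: t) ++ [a]).zip (t ++ [a]) = (a :: t).zip (t ++ [a]) :=
    zip_left_trunc (a :: t) (t ++ [a]) [a] (by simp)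
  unfold cycWeight pathW pathPairs
  rw [rotate_one_cons]
  congr 1
  rw [show ((a :: t) ++ [a]).tail = t ++ [a] by simp, hz]

lemma pathW_concat (ρ : V → V → ℝ) : ∀ (l : List V) (h : l ≠ []) (b : V),
    pathW ρ (l ++ [b]) = pathW ρ l + ρ (l.getLast h) b
  | [a], _, b => by simp
  | a :: c :: t, _, b => by
    have := pathW_concat ρ (c :: t) (by simp) b
    simp only [List.cons_append] at this ⊢
    rw [pathW_cons_cons, pathW_cons_cons, this,
      List.getLast_cons (a := a) (l := c :: t) (by simp)]
    ring

lemma pathW_drop_head (ρ : V → V → ℝ) (htri : ∀ i j k, ρ i j ≤ ρ i k + ρ k j)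
    (a c b : V) (t : List V) :
    pathW ρ (a :: t ++ [b]) ≤ ρ a c + pathW ρ (c :: t ++ [b]) := by
  cases t with
  | nil => simpa using htri a b c
  | cons d t' =>
    simp only [List.cons_append, pathW_cons_cons]
    have := htri a d c
    linarith

lemma shortcut (ρ : V → V → ℝ) (htri : ∀ i j k, ρ i j ≤ ρ i k + ρ k j)
    (p : V → Bool) : ∀ (l : List V) (a b : V),
    pathW ρ (a :: l.filter p ++ [b]) ≤ pathW ρ (a :: l ++ [b])
  | [], a, b => le_refl _
  | c :: t, a, b => by
    by_cases hc : p c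
    · rw [List.filter_cons_of_pos hc]
      have := shortcut ρ htri p t c b
      simp only [List.cons_append, pathW_cons_cons] at this ⊢
      linarith
    · rw [List.filter_cons_of_neg (by simpa using hc)]
      calc pathW ρ (a :: t.filter p ++ [b]) ≤ pathW ρ (a :: t ++ [b]) :=
            shortcut ρ htri p t a b
        _ ≤ ρ a c + pathW ρ (c :: t ++ [b]) := pathW_drop_head ρ htri a c b t
        _ = pathW ρ (a :: c :: t ++ [b]) := by simp [pathW_cons_cons]

lemma zip_rotate_one : ∀ (l l' : List V), l.length = l'.length →
    (l.zip l').rotate 1 = (l.rotate 1).zip (l'.rotate 1)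
  | [], [], _ => by simp
  | a :: t, b :: t', h => by
    rw [List.zip_cons_cons, rotate_one_cons, rotate_one_cons, rotate_one_cons,
      List.zip_append (by simpa using h)]
    simp

lemma zip_rotate : ∀ (n : ℕ) (l l' : List V), l.length = l'.length →
    (l.zip l').rotate n = (l.rotate n).zip (l'.rotate n)
  | 0, l, l', _ => by simp
  | n + 1, l, l', h => by
    rw [show n + 1 = 1 + n by omega, ← List.rotate_rotate, ← List.rotate_rotate,
      ← List.rotate_rotate, zip_rotate_one l l' h,
      zip_rotate n (l.rotate 1) (l'.rotate 1) (by simpa using h)]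

lemma cycWeight_rotate (ρ : V → V → ℝ) (l : List V) (n : ℕ) :
    cycWeight ρ (l.rotate n) = cycWeight ρ l := by
  unfold cycWeight
  have h1 : (l.rotate n).rotate 1 = (l.rotate 1).rotate n := by
    rw [List.rotate_rotate, List.rotate_rotate, Nat.add_comm]
  rw [h1, ← zip_rotate n l (l.rotate 1) (by simp), List.map_rotate]
  exact (List.rotate_perm _ n).sum_eq

/-! ### pairUp -/

/-- Group a list into consecutive pairs. -/
def pairUp : List V → List (V × V)
  | a :: b :: r => (a, b) :: pairUp r
  | _ => []

@[simp] lemma pairUp_nil : pairUp ([] : List V) = [] := rfl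
@[simp] lemma pairUp_single (a : V) : pairUp [a] = [] := rfl
@[simp] lemma pairUp_cons_cons (a b : V) (r : List V) :
    pairUp (a :: b :: r) = (a, b) :: pairUp r := rfl

@[simp] lemma matchVerts_cons (p : V × V) (M : List (V × V)) :
    matchVerts (p :: M) = p.1 :: p.2 :: matchVerts M := rfl

@[simp] lemma matchVerts_nil : matchVerts ([] : List (V × V)) = [] := rfl

lemma matchVerts_pairUp : ∀ (l : List V), Even l.length → matchVerts (pairUp l) = l
  | [], _ => rfl
  | [a], h => by simp at h
  | a :: b :: r, h => by
    have hr : Even r.length := by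
      obtain ⟨k, hk⟩ := h
      simp only [List.length_cons] at hk
      exact ⟨k - 1, by omega⟩
    simp [matchVerts_pairUp r hr]

@[simp] lemma mWeight_nil (ρ : V → V → ℝ) : mWeight ρ ([] : List (V × V)) = 0 := rfl
@[simp] lemma mWeight_cons (ρ : V → V → ℝ) (p : V × V) (M : List (V × V)) :
    mWeight ρ (p :: M) = ρ p.1 p.2 + mWeight ρ M := by simp [mWeight]

lemma pairUp_sum (ρ : V → V → ℝ) : ∀ (l : List V), Even l.length → ∀ c : V,
    mWeight ρ (pairUp l) + mWeight ρ (pairUp (l.tail ++ [c])) = pathW ρ (l ++ [c])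
  | [], _, c => by simp
  | [a], h, c => by simp at h
  | a :: b :: r, h, c => by
    have hr : Even r.length := by
      obtain ⟨k, hk⟩ := h
      simp only [List.length_cons] at hk
      exact ⟨k - 1, by omega⟩
    cases r with
    | nil => simp
    | cons d r' =>
      have hIH := pairUp_sum ρ (d :: r') hr c
      simp only [List.tail_cons] at hIH
      simp only [List.cons_append, pairUp_cons_cons, mWeight_cons, List.tail_cons,
        pathW_cons_cons] at *
      linarith

/-! ### The path graph of a list -/

/-- The edges of the open path along `l`. -/
def edgeList (l : List V) : List (Sym2 V) := (pathPairs l).map fun p => Sym2.mk p.1 p.2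

/-- The path graph along the list `l`. -/
def listGraph (l : List V) : SimpleGraph V :=
  SimpleGraph.fromEdgeSet {e | e ∈ edgeList l}

@[simp] lemma edgeList_nil : edgeList ([] : List V) = [] := rfl
@[simp] lemma edgeList_single (a : V) : edgeList [a] = [] := rfl
@[simp] lemma edgeList_cons_cons (a b : V) (l : List V) :
    edgeList (a :: b :: l) = s(a, b) :: edgeList (b :: l) := rfl

lemma mem_of_mem_pathPairs {l : List V} {x y : V} (h : (x, y) ∈ pathPairs l) :
    x ∈ l ∧ y ∈ l := by
  obtain ⟨hx, hy⟩ := List.of_mem_zip h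
  exact ⟨hx, l.tail_sublist.mem hy⟩

lemma mem_of_mem_edgeList {l : List V} {x y : V} (h : s(x, y) ∈ edgeList l) :
    x ∈ l ∧ y ∈ l := by
  obtain ⟨⟨u, v⟩, huv, he⟩ := List.mem_map.1 h
  rw [Sym2.eq_iff] at he
  rcases he with ⟨rfl, rfl⟩ | ⟨rfl, rfl⟩
  · exact mem_of_mem_pathPairs huv
  · exact (mem_of_mem_pathPairs huv).symm

lemma pathPairs_ne {l : List V} (hl : l.Nodup) {x y : V} (h : (x, y) ∈ pathPairs l) :
    x ≠ y := by
  induction l with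
  | nil => simp [pathPairs] at h
  | cons a t ih =>
    cases t with
    | nil => simp [pathPairs] at h
    | cons b t' =>
      rw [pathPairs_cons_cons, List.mem_cons] at h
      rcases h with h | h
      · obtain ⟨rfl, rfl⟩ := Prod.mk.injEq .. ▸ h
        rintro rfl
        exact (List.nodup_cons.1 hl).1 (List.mem_cons_self)
      · exact ih (List.nodup_cons.1 hl).2 h

lemma edgeList_nodup : ∀ {l : List V}, l.Nodup → (edgeList l).Nodup
  | [], _ => List.nodup_nil
  | [a], _ => List.nodup_nil
  | a :: b :: t, h => by
    rw [edgeList_cons_cons, List.nodup_cons]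
    refine ⟨fun hmem => ?_, edgeList_nodup (List.nodup_cons.1 h).2⟩
    have := (mem_of_mem_edgeList hmem).1
    exact (List.nodup_cons.1 h).1 this

lemma listGraph_adj {l : List V} {x y : V} :
    (listGraph l).Adj x y ↔ s(x, y) ∈ edgeList l ∧ x ≠ y := by
  simp [listGraph, SimpleGraph.fromEdgeSet_adj]

/-- A cut argument: if every edge of `G` respects membership in `S`,
then every walk stays within or without `S`. -/
lemma walk_mem_cut {G : SimpleGraph V} {S : Set V}
    (hS : ∀ ⦃u v⦄, G.Adj u v → (u ∈ S ↔ v ∈ S)) {u v : V} (w : G.Walk u v)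
    (hu : u ∈ S) : v ∈ S := by
  induction w with
  | nil => exact hu
  | cons h _ ih => exact ih ((hS h).1 hu)

lemma pathPairs_append (p : V) : ∀ (P : List V) (q : V) (Q : List V),
    pathPairs ((p :: P) ++ q :: Q) =
      pathPairs (p :: P) ++ ((p :: P).getLast (by simp), q) :: pathPairs (q :: Q)
  | [], q, Q => by simp
  | c :: P', q, Q => by
    have := pathPairs_append c P' q Q
    simp only [List.cons_append] at this ⊢
    rw [pathPairs_cons_cons, this,
      List.getLast_cons (a := p) (l := c :: P') (by simp), pathPairs_cons_cons]
    simp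

lemma mem_pathPairs_split {l : List V} {x y : V} (h : (x, y) ∈ pathPairs l) :
    ∃ l₁ l₂, l = l₁ ++ x :: y :: l₂ := by
  induction l with
  | nil => simp [pathPairs] at h
  | cons a t ih =>
    cases t with
    | nil => simp [pathPairs] at h
    | cons b t' =>
      rw [pathPairs_cons_cons, List.mem_cons] at h
      rcases h with h | h
      · obtain ⟨rfl, rfl⟩ := Prod.mk.injEq .. ▸ h
        exact ⟨[], t', rfl⟩
      · obtain ⟨l₁, l₂, hl⟩ := ih h
        exact ⟨a :: l₁, l₂, by rw [List.cons_append, ← hl]⟩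

end Christofides

open Christofides

section TreePart

variable {V : Type*} [Fintype V] [DecidableEq V]

lemma listGraph_connected (l : List V) (hl : l ≠ []) (hspan : l.toFinset = Finset.univ) :
    (listGraph l).Connected := by
  obtain ⟨a, t, rfl⟩ := List.exists_cons_of_ne_nil hl
  have key : ∀ (t' : List V) (a' : V), (∀ e ∈ edgeList (a' :: t'), e ∈ edgeList (a :: t)) →
      ∀ v ∈ a' :: t', (listGraph (a :: t)).Reachable a' v := by
    intro t'
    induction t' with
    | nil =>
      intro a' _ v hv
      simp only [List.mem_singleton] at hv
      subst hv; exact SimpleGraph.Reachable.refl _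
    | cons b t'' ih =>
      intro a' hsub v hv
      rcases List.mem_cons.1 hv with rfl | hv
      · exact SimpleGraph.Reachable.refl _
      · by_cases hab : a' = b
        · subst hab
          exact ih a' (fun e he => hsub e (by simp [he])) v hv
        · have hadj : (listGraph (a :: t)).Adj a' b := by
            rw [listGraph_adj]
            exact ⟨hsub _ (by simp), hab⟩
          exact hadj.reachable.trans (ih b (fun e he => hsub e (by simp [he])) v hv)
  rw [SimpleGraph.connected_iff]
  refine ⟨?_, ⟨a⟩⟩
  · intro u v
    have hu : u ∈ a :: t := by
      rw [← List.mem_toFinset, hspan]; exact Finset.mem_univ u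
    have hv : v ∈ a :: t := by
      rw [← List.mem_toFinset, hspan]; exact Finset.mem_univ v
    exact (key t a (fun e he => he) u hu).symm.trans (key t a (fun e he => he) v hv)

lemma listGraph_acyclic (l : List V) (hl : l.Nodup) : (listGraph l).IsAcyclic := by
  rw [SimpleGraph.isAcyclic_iff_forall_edge_isBridge]
  intro e he
  have he' : e ∈ edgeList l := by
    have := (SimpleGraph.edgeSet_fromEdgeSet {e' | e' ∈ edgeList l}) ▸ he
    exact this.1
  obtain ⟨⟨x, y⟩, hxy, rfl⟩ := List.mem_map.1 he'
  rw [SimpleGraph.isBridge_iff]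
  have hadj : (listGraph l).Adj x y :=
    listGraph_adj.2 ⟨List.mem_map_of_mem (f := fun p => Sym2.mk p.1 p.2) hxy, pathPairs_ne hl hxy⟩
  dsimp only
  obtain ⟨l₁, l₂, rfl⟩ := mem_pathPairs_split hxy
  -- the cut
  set S : Set V := {v | v ∈ l₁ ++ [x]} with hS
  have hxS : x ∈ S := by simp [hS]
  have hyS : y ∉ S := by
    intro hy
    have hnd := hl
    rw [List.nodup_append] at hnd
    simp only [hS, Set.mem_setOf_eq, List.mem_append, List.mem_singleton] at hy
    rcases hy with hy | rfl
    · exact hnd.2.2 y hy y (by simp) rfl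
    · exact (List.nodup_cons.1 hnd.2.1).1 (by simp)
  rintro ⟨w⟩
  refine hyS (walk_mem_cut ?_ w hxS)
  -- every edge of the deleted graph respects the cut
  intro u v huv
  rw [SimpleGraph.deleteEdges_adj, listGraph_adj] at huv
  obtain ⟨⟨hmem, hne⟩, hnot⟩ := huv
  have hne_e : s(u, v) ≠ s(x, y) := by
    intro hcontr
    exact hnot (by simp [hcontr])
  -- decompose the pairs of l₁ ++ x :: y :: l₂
  obtain ⟨⟨u', v'⟩, hp, hsy⟩ := List.mem_map.1 hmem
  -- suffices to show for pairs
  suffices hsuff : ∀ u v : V, (u, v) ∈ pathPairs (l₁ ++ x :: y :: l₂) →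
      s(u, v) ≠ s(x, y) → (u ∈ S ↔ v ∈ S) by
    rw [Sym2.eq_iff] at hsy
    rcases hsy with ⟨rfl, rfl⟩ | ⟨rfl, rfl⟩
    · exact hsuff _ _ hp hne_e
    · exact (hsuff _ _ hp (by rw [Sym2.eq_swap] at hne_e; exact hne_e)).symm
  intro u v hp' hne'
  have hnd := hl
  cases l₁ with
  | nil =>
    simp only [List.nil_append] at hp' hnd ⊢
    rw [pathPairs_cons_cons, List.mem_cons] at hp'
    rcases hp' with h | h
    · obtain ⟨rfl, rfl⟩ := Prod.mk.injEq .. ▸ h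
      exact absurd rfl hne'
    · -- both u, v in y :: l₂, disjoint from S = {x}
      obtain ⟨hu, hv⟩ := mem_of_mem_pathPairs h
      have hx : x ∉ y :: l₂ := (List.nodup_cons.1 hnd).1
      constructor <;> intro hmem' <;> exfalso
      · simp only [hS, Set.mem_setOf_eq, List.nil_append, List.mem_singleton] at hmem'
        exact hx (hmem' ▸ hu)
      · simp only [hS, Set.mem_setOf_eq, List.nil_append, List.mem_singleton] at hmem'
        exact hx (hmem' ▸ hv)
  | cons p P =>
    rw [show (p :: P) ++ x :: y :: l₂ = (p :: P) ++ x :: (y :: l₂) from rfl,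
      pathPairs_append p P x (y :: l₂), List.mem_append, List.mem_cons] at hp'
    have hndA : ((p :: P) ++ x :: y :: l₂).Nodup := hnd
    rw [List.nodup_append] at hndA
    have hsub : ∀ z ∈ p :: P, z ∈ S := by
      intro z hz
      simp only [hS, Set.mem_setOf_eq]
      rcases List.mem_cons.1 hz with rfl | hz'
      · exact List.mem_cons_self
      · exact List.mem_cons_of_mem _ (List.mem_append_left _ hz')
    have hxmem : x ∈ S := by
      simp only [hS, Set.mem_setOf_eq]
      exact List.mem_cons_of_mem _ (List.mem_append_right _ (by simp))
    rcases hp' with h | h | h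
    · -- inside p :: P : both in S
      obtain ⟨hu, hv⟩ := mem_of_mem_pathPairs h
      exact iff_of_true (hsub u hu) (hsub v hv)
    · -- the junction edge (last, x) : both in S
      obtain ⟨rfl, rfl⟩ := Prod.mk.injEq .. ▸ h
      have hlast : (p :: P).getLast (by simp) ∈ p :: P := List.getLast_mem _
      exact iff_of_true (hsub _ hlast) hxmem
    · -- inside x :: y :: l₂
      rw [pathPairs_cons_cons, List.mem_cons] at h
      rcases h with h | h
      · obtain ⟨rfl, rfl⟩ := Prod.mk.injEq .. ▸ h
        exact absurd rfl hne'
      · obtain ⟨hu, hv⟩ := mem_of_mem_pathPairs h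
        have hdis : ∀ z ∈ y :: l₂, z ∉ S := by
          intro z hz hzS
          simp [hS] at hzS
          rcases hzS with rfl | hz1 | rfl
          · exact hndA.2.2 z (List.mem_cons_self) z (by simp [hz]) rfl
          · exact hndA.2.2 z (List.mem_cons_of_mem _ hz1) z (by simp [hz]) rfl
          · exact (List.nodup_cons.1 hndA.2.1).1 hz
        exact iff_of_false (hdis u hu) (hdis v hv)

lemma listGraph_isTree (l : List V) (hl : l.Nodup) (hne : l ≠ [])
    (hspan : l.toFinset = Finset.univ) : (listGraph l).IsTree :=
  ⟨listGraph_connected l hne hspan, listGraph_acyclic l hl⟩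

lemma gWeight_listGraph (ρ : V → V → ℝ) (hsym : ∀ i j, ρ i j = ρ j i)
    (l : List V) (hl : l.Nodup) :
    gWeight (Sym2.lift ⟨ρ, hsym⟩) (listGraph l) = pathW ρ l := by
  have hnd : ∀ e ∈ edgeList l, ¬ e.IsDiag := by
    intro e he
    obtain ⟨⟨x, y⟩, hxy, rfl⟩ := List.mem_map.1 he
    simpa using pathPairs_ne hl hxy
  have hset : (listGraph l).edgeSet = {e | e ∈ edgeList l} := by
    rw [listGraph, SimpleGraph.edgeSet_fromEdgeSet]
    ext e
    simp only [Set.mem_diff, Set.mem_setOf_eq, and_iff_left_iff_imp]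
    exact fun he => hnd e he
  have hfin : (listGraph l).edgeSet.toFinset = (edgeList l).toFinset := by
    ext e; simp [hset]
  rw [gWeight, hfin, List.sum_toFinset _ (edgeList_nodup hl)]
  unfold pathW edgeList
  rw [List.map_map]
  congr 1

end TreePart

/-- In the Serdyukov–Christofides setting, `ρ(T) + ρ(M) < (3/2)·ρ(L₀)`,
where `T` is a minimum spanning tree, `M` a minimum perfect matching on the
odd-degree vertices of `T`, and `L₀` a minimum Hamiltonian cycle. -/
theorem tree_plus_matching_lt {V : Type*} [Fintype V] [DecidableEq V]
    (ρ : V → V → ℝ) (hpos : ∀ i j, i ≠ j → 0 < ρ i j) (hsym : ∀ i j, ρ i j = ρ j i)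
    (htri : ∀ i j k, ρ i j ≤ ρ i k + ρ k j) (hV : 3 ≤ Fintype.card V)
    (T : SimpleGraph V) (hT : T.IsTree)
    (hTmin : ∀ T' : SimpleGraph V, T'.IsTree →
      gWeight (Sym2.lift ⟨ρ, hsym⟩) T ≤ gWeight (Sym2.lift ⟨ρ, hsym⟩) T')
    (M : List (V × V))
    (hM : IsPM (Finset.univ.filter fun v => Odd (T.degree v)) M)
    (hMmin : ∀ M' : List (V × V),
      IsPM (Finset.univ.filter fun v => Odd (T.degree v)) M' →
        mWeight ρ M ≤ mWeight ρ M')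
    (L₀ : List V) (hL₀ : L₀.Nodup) (hL₀span : L₀.toFinset = Finset.univ)
    (hL₀min : ∀ L : List V, L.Nodup → L.toFinset = Finset.univ →
      cycWeight ρ L₀ ≤ cycWeight ρ L) :
    gWeight (Sym2.lift ⟨ρ, hsym⟩) T + mWeight ρ M < 3 / 2 * cycWeight ρ L₀ := by
  have hρ0 : ∀ i j, 0 ≤ ρ i j := by
    intro i j
    by_cases h : i = j
    · subst h
      have := htri i i i
      linarith
    · exact (hpos i j h).le
  -- basic structure of L₀
  have hlen : L₀.length = Fintype.card V := by
    rw [← List.toFinset_card_of_nodup hL₀, hL₀span, Finset.card_univ]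
  have hlen3 : 3 ≤ L₀.length := hlen ▸ hV
  obtain ⟨a, t, rfl⟩ := List.exists_cons_of_ne_nil
    (show L₀ ≠ [] by intro h; rw [h] at hlen3; simp at hlen3)
  set L₀ := a :: t with hL0def
  have htne : t ≠ [] := by
    intro h; rw [hL0def, h] at hlen3; simp at hlen3
  -- Part A : ρ(T) < ρ(L₀)
  have hcycA : cycWeight ρ L₀ = pathW ρ L₀ + ρ (t.getLast htne) a := by
    rw [hL0def, cycWeight_eq_pathW, pathW_concat ρ (a :: t) (by simp) a,
      List.getLast_cons htne]
  have hlast_ne : t.getLast htne ≠ a := by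
    intro h
    have : t.getLast htne ∈ t := List.getLast_mem htne
    rw [h] at this
    exact (List.nodup_cons.1 hL₀).1 this
  have hA : gWeight (Sym2.lift ⟨ρ, hsym⟩) T < cycWeight ρ L₀ := by
    have h1 : gWeight (Sym2.lift ⟨ρ, hsym⟩) T ≤ pathW ρ L₀ := by
      have := hTmin (listGraph L₀) (listGraph_isTree L₀ hL₀ (by simp [hL0def]) hL₀span)
      rwa [gWeight_listGraph ρ hsym L₀ hL₀] at this
    have h2 : 0 < ρ (t.getLast htne) a := hpos _ _ hlast_ne
    linarith
  -- Part B : 2 ρ(M) ≤ ρ(L₀)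
  set X : Finset V := Finset.univ.filter fun v => Odd (T.degree v) with hX
  have hB : 2 * mWeight ρ M ≤ cycWeight ρ L₀ := by
    rcases X.eq_empty_or_nonempty with hXe | ⟨x, hx⟩
    · -- X empty : M = []
      have hMnil : M = [] := by
        have h1 : (matchVerts M).toFinset = ∅ := by rw [hM.2, hXe]
        have h2 : matchVerts M = [] := by
          rw [← List.toFinset_eq_empty_iff]; exact h1
        cases M with
        | nil => rfl
        | cons p M' => simp [matchVerts] at h2
      rw [hMnil]
      have : 0 ≤ cycWeight ρ L₀ := by
        apply List.sum_nonneg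
        intro z hz
        obtain ⟨⟨u, v⟩, _, rfl⟩ := List.mem_map.1 hz
        exact hρ0 u v
      simpa using this
    · -- X nonempty : rotate L₀ to start at x ∈ X
      have hxL : x ∈ L₀ := by
        rw [← List.mem_toFinset, hL₀span]; exact Finset.mem_univ x
      obtain ⟨l₁, l₂, hsplit⟩ := List.append_of_mem hxL
      set l : List V := x :: (l₂ ++ l₁) with hldef
      have hrot : l = L₀.rotate l₁.length := by
        rw [List.rotate_eq_drop_append_take (by rw [hsplit]; simp), hsplit,
          List.drop_left, List.take_left, hldef]
        simp
      have hlnd : l.Nodup := by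
        rw [hrot]; exact (List.nodup_rotate).2 hL₀
      have hlspan : l.toFinset = Finset.univ := by
        ext v
        rw [List.mem_toFinset, hrot, List.mem_rotate, ← List.mem_toFinset, hL₀span]
      have hcyc_l : cycWeight ρ l = cycWeight ρ L₀ := by
        rw [hrot]; exact cycWeight_rotate ρ L₀ l₁.length
      -- filter to X
      set f : List V := (l₂ ++ l₁).filter (fun v => decide (v ∈ X)) with hfdef
      set l' : List V := x :: f with hl'def
      have hl'filter : l' = l.filter (fun v => decide (v ∈ X)) := by
        rw [hldef, List.filter_cons_of_pos (by simpa using hx), hl'def]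
      have hl'nd : l'.Nodup := by
        rw [hl'filter]; exact hlnd.filter _
      have hl'fin : l'.toFinset = X := by
        ext v
        rw [hl'filter, List.mem_toFinset, List.mem_filter]
        simp only [decide_eq_true_eq]
        constructor
        · exact fun h => h.2
        · intro h
          exact ⟨by rw [← List.mem_toFinset, hlspan]; exact Finset.mem_univ v, h⟩
      have hl'len : Even l'.length := by
        rw [← List.toFinset_card_of_nodup hl'nd, hl'fin, hX]
        have := T.even_card_odd_degree_vertices
        convert this using 2
      -- shortcut : cycWeight l' ≤ cycWeight l
      have hshort : cycWeight ρ l' ≤ cycWeight ρ l := by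
        rw [hl'def, hldef, cycWeight_eq_pathW, cycWeight_eq_pathW]
        have := shortcut ρ htri (fun v => decide (v ∈ X)) (l₂ ++ l₁) x x
        simpa [hfdef] using this
      -- two matchings
      have hpair := pairUp_sum ρ l' hl'len x
      have hM₁ : IsPM X (pairUp l') := by
        constructor
        · rw [matchVerts_pairUp l' hl'len]; exact hl'nd
        · rw [matchVerts_pairUp l' hl'len]; exact hl'fin
      have hM₂ : IsPM X (pairUp (l'.tail ++ [x])) := by
        have hperm : (l'.tail ++ [x]) = l'.rotate 1 := by
          rw [hl'def, rotate_one_cons]; simp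
        have hlen2 : Even (l'.tail ++ [x]).length := by
          rw [hperm, List.length_rotate]; exact hl'len
        constructor
        · rw [matchVerts_pairUp _ hlen2, hperm]
          exact (List.nodup_rotate).2 hl'nd
        · rw [matchVerts_pairUp _ hlen2, hperm]
          ext v
          rw [List.mem_toFinset, List.mem_rotate, ← List.mem_toFinset, hl'fin]
      have hcyc_l' : cycWeight ρ l' = pathW ρ (l' ++ [x]) := by
        rw [hl'def, cycWeight_eq_pathW]
      have h1 := hMmin _ hM₁
      have h2 := hMmin _ hM₂
      have : mWeight ρ (pairUp l') + mWeight ρ (pairUp (l'.tail ++ [x]))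
          = cycWeight ρ l' := by rw [hcyc_l', ← hpair]
      linarith
  linarith
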